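/- Let M be a sequence of positive reals with 0 < L := liminf (M_p)^{1/p} < ∞, and let M^{lc} denote the log-convex minorant of M (the pointwise largest log-convex sequence ≤ M). Then lim_{p→∞} (M^{lc}_p)^{1/p} = L. -/

import Mathlib

open Filter

noncomputable def Mlc (M : ℕ → ℝ) (p : ℕ) : ℝ :=
  sSup {x : ℝ | ∃ L : ℕ → ℝ, (∀ q, 0 < L q) ∧
    (∀ q : ℕ, 1 ≤ q → (L q) ^ 2 ≤ L (q - 1) * L (q + 1)) ∧
    (∀ q, L q ≤ M q) ∧ x = L p}

private lemma logconvex_chain (L : ℕ → ℝ) (hpos : ∀ q, 0 < L q)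
    (hconv : ∀ q : ℕ, 1 ≤ q → (L q) ^ 2 ≤ L (q - 1) * L (q + 1))
    (p q : ℕ) (hp : 1 ≤ p) (hpq : p ≤ q) :
    L p ^ q ≤ L 0 ^ (q - p) * L q ^ p := by
  set f : ℕ → ℝ := fun i => Real.log (L i) with hf
  set g : ℕ → ℝ := fun i => f (i + 1) - f i with hgdef
  have hg : Monotone g := by
    apply monotone_nat_of_le_succ
    intro i
    have h := hconv (i + 1) (by omega)
    simp only [Nat.add_sub_cancel] at h
    have hlog := Real.log_le_log (pow_pos (hpos (i + 1)) 2) h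
    rw [Real.log_pow, Real.log_mul (hpos i).ne' (hpos (i + 2)).ne'] at hlog
    simp only [hgdef, hf]
    push_cast at hlog
    have : i + 1 + 1 = i + 2 := by omega
    rw [this]
    linarith
  have sum1 : ∑ i ∈ Finset.range p, g i = f p - f 0 := Finset.sum_range_sub f p
  have sum2 : ∑ i ∈ Finset.Ico p q, g i = f q - f p := by
    rw [Finset.sum_Ico_eq_sub _ hpq, Finset.sum_range_sub f, Finset.sum_range_sub f]
    ring
  have b1 : f p - f 0 ≤ (p : ℝ) * g (p - 1) := by
    have h := Finset.sum_le_card_nsmul (Finset.range p) g (g (p - 1))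
      (fun i hi => hg (by simp only [Finset.mem_range] at hi; omega))
    rw [sum1, Finset.card_range, nsmul_eq_mul] at h
    exact h
  have b2 : ((q - p : ℕ) : ℝ) * g (p - 1) ≤ f q - f p := by
    have h := Finset.card_nsmul_le_sum (Finset.Ico p q) g (g (p - 1))
      (fun i hi => hg (by simp only [Finset.mem_Ico] at hi; omega))
    rw [sum2, Nat.card_Ico, nsmul_eq_mul] at h
    exact h
  have hA : ((q - p : ℕ) : ℝ) = (q : ℝ) - (p : ℝ) := by
    rw [Nat.cast_sub hpq]
  have key : (q : ℝ) * f p ≤ ((q - p : ℕ) : ℝ) * f 0 + (p : ℝ) * f q := by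
    have h1 := mul_le_mul_of_nonneg_left b1
      (show (0 : ℝ) ≤ ((q - p : ℕ) : ℝ) by positivity)
    have h2 := mul_le_mul_of_nonneg_left b2 (show (0 : ℝ) ≤ (p : ℝ) by positivity)
    rw [hA] at h1 h2 ⊢
    nlinarith
  have hL0 : (0 : ℝ) < L 0 ^ (q - p) * L q ^ p :=
    mul_pos (pow_pos (hpos 0) _) (pow_pos (hpos q) _)
  rw [← Real.exp_log (pow_pos (hpos p) q), ← Real.exp_log hL0]
  apply Real.exp_le_exp.2
  rw [Real.log_pow, Real.log_mul (pow_pos (hpos 0) _).ne' (pow_pos (hpos q) _).ne',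
    Real.log_pow, Real.log_pow]
  exact key

private lemma geom_minorant (M : ℕ → ℝ) (hM : ∀ p, 0 < M p) (c : ℝ) (hc : 0 < c)
    (N : ℕ) (h : ∀ p, N ≤ p → c ^ p ≤ M p) :
    ∃ a : ℝ, 0 < a ∧ a ≤ 1 ∧ ∀ p, a * c ^ p ≤ M p := by
  set a : ℝ := min 1 ((Finset.range (N + 1)).inf' (by simp) (fun p => M p / c ^ p)) with ha
  refine ⟨a, ?_, min_le_left _ _, ?_⟩
  · apply lt_min one_pos
    rw [Finset.lt_inf'_iff]
    intro p _
    exact div_pos (hM p) (pow_pos hc p)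
  · intro p
    by_cases hpN : p ≤ N
    · have h1 : a ≤ M p / c ^ p := le_trans (min_le_right _ _)
        (Finset.inf'_le _ (by simp only [Finset.mem_range]; omega))
      calc a * c ^ p ≤ (M p / c ^ p) * c ^ p :=
            mul_le_mul_of_nonneg_right h1 (by positivity)
        _ = M p := by field_simp
    · calc a * c ^ p ≤ 1 * c ^ p :=
            mul_le_mul_of_nonneg_right (min_le_left _ _) (by positivity)
      _ = c ^ p := one_mul _
      _ ≤ M p := h p (by omega)

private lemma tendsto_rpow_one_div_nat (a : ℝ) (ha : 0 < a) :
    Tendsto (fun p : ℕ => a ^ (1 / (p : ℝ))) atTop (nhds 1) := by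
  have heq : (fun p : ℕ => a ^ (1 / (p : ℝ)))
      = fun p : ℕ => Real.exp (Real.log a * (1 / (p : ℝ))) := by
    funext p
    rw [Real.rpow_def_of_pos ha]
  rw [heq]
  have h2 : Tendsto (fun p : ℕ => Real.log a * (1 / (p : ℝ))) atTop (nhds 0) := by
    have := tendsto_one_div_atTop_nhds_zero_nat.const_mul (Real.log a)
    simpa using this
  have := (Real.continuous_exp.continuousAt (x := 0)).tendsto.comp h2
  simpa [Function.comp_def] using this

theorem lc_minorant_roots_tendsto_liminf
    (M : ℕ → ℝ) (hM : ∀ p, 0 < M p) (l : ℝ) (hlpos : 0 < l)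
    (hliminf : liminf (fun p : ℕ => ((M p ^ (1 / (p : ℝ)) : ℝ) : EReal)) atTop = (l : EReal)) :
    Tendsto (fun p : ℕ => (Mlc M p) ^ (1 / (p : ℝ))) atTop (nhds l) := by
  set S : ℕ → Set ℝ := fun p => {x : ℝ | ∃ L : ℕ → ℝ, (∀ q, 0 < L q) ∧
    (∀ q : ℕ, 1 ≤ q → (L q) ^ 2 ≤ L (q - 1) * L (q + 1)) ∧
    (∀ q, L q ≤ M q) ∧ x = L p} with hSdef
  have hMlc : ∀ p, Mlc M p = sSup (S p) := fun _ => rfl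
  have hbdd : ∀ p, BddAbove (S p) := by
    intro p
    refine ⟨M p, ?_⟩
    rintro x ⟨L, _, _, hle, rfl⟩
    exact hle p
  have hroot : ∀ p : ℕ, 1 ≤ p → (M p ^ (1 / (p : ℝ))) ^ p = M p := by
    intro p hp
    rw [one_div, Real.rpow_inv_natCast_pow (hM p).le (by omega)]
  have hlow : ∀ c : ℝ, c < l → ∀ᶠ p : ℕ in atTop, c < M p ^ (1 / (p : ℝ)) := by
    intro c hc
    have h1 : (c : EReal) < liminf (fun p : ℕ => ((M p ^ (1 / (p : ℝ)) : ℝ) : EReal)) atTop := by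
      rw [hliminf]; exact_mod_cast hc
    exact (eventually_lt_of_lt_liminf h1).mono (fun p hp => by exact_mod_cast hp)
  have hupfreq : ∀ b : ℝ, l < b → ∃ᶠ q : ℕ in atTop, M q ^ (1 / (q : ℝ)) < b := by
    intro b hb
    have h1 : liminf (fun p : ℕ => ((M p ^ (1 / (p : ℝ)) : ℝ) : EReal)) atTop < (b : EReal) := by
      rw [hliminf]; exact_mod_cast hb
    exact (frequently_lt_of_liminf_lt (by isBoundedDefault) h1).mono
      (fun p hp => by exact_mod_cast hp)
  have hmem : ∀ c : ℝ, 0 < c → c < l → ∃ a : ℝ, 0 < a ∧ a ≤ 1 ∧ ∀ p, (a * c ^ p) ∈ S p := by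
    intro c hc0 hcl
    obtain ⟨N, hN⟩ := (hlow c hcl).exists_forall_of_atTop
    obtain ⟨a, ha0, ha1, haM⟩ := geom_minorant M hM c hc0 (max N 1) (fun p hp => by
      have h1 := hN p (le_trans (le_max_left _ _) hp)
      calc c ^ p ≤ (M p ^ (1 / (p : ℝ))) ^ p := pow_le_pow_left₀ hc0.le h1.le p
        _ = M p := hroot p (le_trans (le_max_right _ _) hp))
    refine ⟨a, ha0, ha1, fun p => ⟨fun q => a * c ^ q, fun q => by positivity, ?_, haM, rfl⟩⟩
    intro q hq
    obtain ⟨k, rfl⟩ := Nat.exists_eq_add_of_le hq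
    have h1 : 1 + k - 1 = k := by omega
    rw [h1]
    have h2 : (a * c ^ (1 + k)) ^ 2 = (a * c ^ k) * (a * c ^ (1 + k + 1)) := by ring
    exact le_of_eq h2
  have hne : ∀ p, (S p).Nonempty := by
    obtain ⟨a, _, _, h⟩ := hmem (l / 2) (by linarith) (by linarith)
    exact fun p => ⟨_, h p⟩
  have hMlc_pos : ∀ p, 0 < Mlc M p := by
    obtain ⟨a, ha0, _, h⟩ := hmem (l / 2) (by linarith) (by linarith)
    intro p
    have := le_csSup (hbdd p) (h p)
    rw [hMlc p]
    calc (0 : ℝ) < a * (l / 2) ^ p := by positivity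
      _ ≤ sSup (S p) := this
  have hub : ∀ b' : ℝ, l < b' → ∀ p : ℕ, 1 ≤ p →
      Mlc M p ≤ max 1 (M 0) * b' ^ p := by
    intro b' hb' p hp
    have hb'pos : 0 < b' := lt_trans hlpos hb'
    set C := max 1 (M 0) with hCdef
    have hC1 : (1 : ℝ) ≤ C := le_max_left _ _
    obtain ⟨q, hq1, hq2⟩ :=
      ((hupfreq b' hb').and_eventually (eventually_ge_atTop (max p 1))).exists
    have hq1' : 1 ≤ q := le_trans (le_max_right _ _) hq2
    have hpq : p ≤ q := le_trans (le_max_left _ _) hq2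
    have hMq : M q ≤ b' ^ q := by
      calc M q = (M q ^ (1 / (q : ℝ))) ^ q := (hroot q hq1').symm
        _ ≤ b' ^ q := pow_le_pow_left₀ (Real.rpow_nonneg (hM q).le _) hq1.le q
    rw [hMlc p]
    apply csSup_le (hne p)
    rintro x ⟨L, hLpos, hLconv, hLle, rfl⟩
    have hchain := logconvex_chain L hLpos hLconv p q hp hpq
    have hkey : L p ^ q ≤ (C * b' ^ p) ^ q := by
      calc L p ^ q ≤ L 0 ^ (q - p) * L q ^ p := hchain
        _ ≤ C ^ q * (b' ^ q) ^ p := by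
            apply mul_le_mul _ _ (pow_pos (hLpos q) p).le (by positivity)
            · calc L 0 ^ (q - p) ≤ C ^ (q - p) :=
                    pow_le_pow_left₀ (hLpos 0).le (le_trans (hLle 0) (le_max_right _ _)) _
                _ ≤ C ^ q := pow_le_pow_right₀ hC1 (Nat.sub_le q p)
            · exact pow_le_pow_left₀ (hLpos q).le (le_trans (hLle q) hMq) p
        _ = (C * b' ^ p) ^ q := by rw [mul_pow, ← pow_mul, ← pow_mul, Nat.mul_comm]
    exact le_of_pow_le_pow_left₀ (by omega) (by positivity) hkey
  rw [tendsto_order]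
  constructor
  · intro c hc
    obtain ⟨c', hc'1, hc'2⟩ := exists_between (show max c (l / 2) < l from max_lt hc (by linarith))
    have hc'pos : 0 < c' := lt_of_le_of_lt (le_trans (by linarith) (le_max_right c (l / 2))) hc'1
    have hcc' : c < c' := lt_of_le_of_lt (le_max_left _ _) hc'1
    obtain ⟨a, ha0, ha1, hamem⟩ := hmem c' hc'pos hc'2
    have hlb : ∀ p, a * c' ^ p ≤ Mlc M p := fun p => by
      rw [hMlc p]; exact le_csSup (hbdd p) (hamem p)
    have htend : Tendsto (fun p : ℕ => a ^ (1 / (p : ℝ)) * c') atTop (nhds c') := by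
      have := (tendsto_rpow_one_div_nat a ha0).mul_const c'
      simpa using this
    have hev := (tendsto_order.1 htend).1 c hcc'
    filter_upwards [hev, eventually_ge_atTop 1] with p h1 h2
    calc c < a ^ (1 / (p : ℝ)) * c' := h1
      _ = (a * c' ^ p) ^ (1 / (p : ℝ)) := by
          rw [Real.mul_rpow ha0.le (by positivity), one_div,
            Real.pow_rpow_inv_natCast hc'pos.le (by omega)]
      _ ≤ Mlc M p ^ (1 / (p : ℝ)) :=
          Real.rpow_le_rpow (by positivity) (hlb p) (by positivity)
  · intro b hb
    obtain ⟨b', hb'1, hb'2⟩ := exists_between hb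
    have hb'pos : 0 < b' := lt_trans hlpos hb'1
    set C := max 1 (M 0) with hCdef
    have hCpos : (0 : ℝ) < C := lt_of_lt_of_le one_pos (le_max_left _ _)
    have htend : Tendsto (fun p : ℕ => C ^ (1 / (p : ℝ)) * b') atTop (nhds b') := by
      have := (tendsto_rpow_one_div_nat C hCpos).mul_const b'
      simpa using this
    have hev := (tendsto_order.1 htend).2 b hb'2
    filter_upwards [hev, eventually_ge_atTop 1] with p h1 h2
    calc Mlc M p ^ (1 / (p : ℝ)) ≤ (C * b' ^ p) ^ (1 / (p : ℝ)) :=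
          Real.rpow_le_rpow (hMlc_pos p).le (hub b' hb'1 p h2) (by positivity)
      _ = C ^ (1 / (p : ℝ)) * b' := by
          rw [Real.mul_rpow hCpos.le (by positivity), one_div,
            Real.pow_rpow_inv_natCast hb'pos.le (by omega)]
      _ < b := h1
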